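/- For real c with 0 < |c|·t < π and t > 0, ((cos(2ct)-1) + 2t²c²·cos(2ct))/(t(cos(2ct)-1) + t²c·sin(2ct)) ≤ 5/t; equivalently, -((cos(2ct)-1) + 2t²c²cos(2ct))/(t(cos(2ct)-1) + t²c·sin(2ct)) ≥ -5/t. -/

import Mathlib

open Real

private lemma nonneg_of_hasDeriv {f g : ℝ → ℝ} (h0 : f 0 = 0)
    (hd : ∀ y : ℝ, HasDerivAt f (g y) y) (hg : ∀ y : ℝ, 0 ≤ y → 0 ≤ g y) :
    ∀ x : ℝ, 0 ≤ x → 0 ≤ f x := by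
  intro x hx
  have hmono : MonotoneOn f (Set.Ici (0:ℝ)) := by
    apply monotoneOn_of_deriv_nonneg (convex_Ici 0)
    · exact fun y _ => (hd y).continuousAt.continuousWithinAt
    · exact fun y _ => (hd y).differentiableAt.differentiableWithinAt
    · intro y hy
      rw [interior_Ici] at hy
      rw [(hd y).deriv]
      exact hg y hy.le
  have := hmono (Set.self_mem_Ici) (Set.mem_Ici.2 hx) hx
  rwa [h0] at this

private lemma hdiv (n : ℕ) (a y : ℝ) :
    HasDerivAt (fun y : ℝ => y ^ n / a) ((n : ℝ) * y ^ (n - 1) / a) y :=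
  (hasDerivAt_pow n y).div_const a

-- L3
private lemma sin_lb3 {x : ℝ} (hx : 0 ≤ x) : x - x^3/6 ≤ Real.sin x := by
  have h := nonneg_of_hasDeriv (f := fun y : ℝ => Real.sin y - (y - y^3/6))
      (g := fun y : ℝ => Real.cos y - (1 - y^2/2))
      (by norm_num)
      (fun y => by
        have h := (Real.hasDerivAt_sin y).sub ((hasDerivAt_id' y).sub (hdiv 3 6 y))
        refine h.congr_deriv ?_
        norm_num
        ring)
      (fun y _ => by
        have := Real.one_sub_sq_div_two_le_cos (x := y)
        linarith) x hx
  linarith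

-- L4
private lemma cos_ub4 {x : ℝ} (hx : 0 ≤ x) : Real.cos x ≤ 1 - x^2/2 + x^4/24 := by
  have h := nonneg_of_hasDeriv (f := fun y : ℝ => 1 - y^2/2 + y^4/24 - Real.cos y)
      (g := fun y : ℝ => Real.sin y - (y - y^3/6))
      (by norm_num)
      (fun y => by
        have h := (((hasDerivAt_const y (1:ℝ)).sub (hdiv 2 2 y)).add (hdiv 4 24 y)).sub
          (Real.hasDerivAt_cos y)
        refine h.congr_deriv ?_
        norm_num
        ring)
      (fun y hy => by
        have := sin_lb3 hy
        linarith) x hx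
  linarith

-- L5
private lemma sin_ub5 {x : ℝ} (hx : 0 ≤ x) : Real.sin x ≤ x - x^3/6 + x^5/120 := by
  have h := nonneg_of_hasDeriv (f := fun y : ℝ => y - y^3/6 + y^5/120 - Real.sin y)
      (g := fun y : ℝ => 1 - y^2/2 + y^4/24 - Real.cos y)
      (by norm_num)
      (fun y => by
        have h := (((hasDerivAt_id' y).sub (hdiv 3 6 y)).add (hdiv 5 120 y)).sub
          (Real.hasDerivAt_sin y)
        refine h.congr_deriv ?_
        norm_num
        ring)
      (fun y hy => by
        have := cos_ub4 hy
        linarith) x hx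
  linarith

-- L6
private lemma cos_lb6 {x : ℝ} (hx : 0 ≤ x) :
    1 - x^2/2 + x^4/24 - x^6/720 ≤ Real.cos x := by
  have h := nonneg_of_hasDeriv
      (f := fun y : ℝ => Real.cos y - (1 - y^2/2 + y^4/24 - y^6/720))
      (g := fun y : ℝ => y - y^3/6 + y^5/120 - Real.sin y)
      (by norm_num)
      (fun y => by
        have h := (Real.hasDerivAt_cos y).sub
          ((((hasDerivAt_const y (1:ℝ)).sub (hdiv 2 2 y)).add (hdiv 4 24 y)).sub (hdiv 6 720 y))
        refine h.congr_deriv ?_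
        norm_num
        ring)
      (fun y hy => by
        have := sin_ub5 hy
        linarith) x hx
  linarith

-- L7
private lemma sin_lb7 {x : ℝ} (hx : 0 ≤ x) :
    x - x^3/6 + x^5/120 - x^7/5040 ≤ Real.sin x := by
  have h := nonneg_of_hasDeriv
      (f := fun y : ℝ => Real.sin y - (y - y^3/6 + y^5/120 - y^7/5040))
      (g := fun y : ℝ => Real.cos y - (1 - y^2/2 + y^4/24 - y^6/720))
      (by norm_num)
      (fun y => by
        have h := (Real.hasDerivAt_sin y).sub
          ((((hasDerivAt_id' y).sub (hdiv 3 6 y)).add (hdiv 5 120 y)).sub (hdiv 7 5040 y))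
        refine h.congr_deriv ?_
        norm_num
        ring)
      (fun y hy => by
        have := cos_lb6 hy
        linarith) x hx
  linarith

-- L8
private lemma cos_ub8 {x : ℝ} (hx : 0 ≤ x) :
    Real.cos x ≤ 1 - x^2/2 + x^4/24 - x^6/720 + x^8/40320 := by
  have h := nonneg_of_hasDeriv
      (f := fun y : ℝ => 1 - y^2/2 + y^4/24 - y^6/720 + y^8/40320 - Real.cos y)
      (g := fun y : ℝ => Real.sin y - (y - y^3/6 + y^5/120 - y^7/5040))
      (by norm_num)
      (fun y => by
        have h := (((((hasDerivAt_const y (1:ℝ)).sub (hdiv 2 2 y)).add (hdiv 4 24 y)).sub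
          (hdiv 6 720 y)).add (hdiv 8 40320 y)).sub (Real.hasDerivAt_cos y)
        refine h.congr_deriv ?_
        norm_num
        ring)
      (fun y hy => by
        have := sin_lb7 hy
        linarith) x hx
  linarith

-- L9
private lemma sin_ub9 {x : ℝ} (hx : 0 ≤ x) :
    Real.sin x ≤ x - x^3/6 + x^5/120 - x^7/5040 + x^9/362880 := by
  have h := nonneg_of_hasDeriv
      (f := fun y : ℝ => y - y^3/6 + y^5/120 - y^7/5040 + y^9/362880 - Real.sin y)
      (g := fun y : ℝ => 1 - y^2/2 + y^4/24 - y^6/720 + y^8/40320 - Real.cos y)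
      (by norm_num)
      (fun y => by
        have h := (((((hasDerivAt_id' y).sub (hdiv 3 6 y)).add (hdiv 5 120 y)).sub
          (hdiv 7 5040 y)).add (hdiv 9 362880 y)).sub (Real.hasDerivAt_sin y)
        refine h.congr_deriv ?_
        norm_num
        ring)
      (fun y hy => by
        have := cos_ub8 hy
        linarith) x hx
  linarith

-- L10
private lemma cos_lb10 {x : ℝ} (hx : 0 ≤ x) :
    1 - x^2/2 + x^4/24 - x^6/720 + x^8/40320 - x^10/3628800 ≤ Real.cos x := by
  have h := nonneg_of_hasDeriv
      (f := fun y : ℝ =>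
        Real.cos y - (1 - y^2/2 + y^4/24 - y^6/720 + y^8/40320 - y^10/3628800))
      (g := fun y : ℝ => y - y^3/6 + y^5/120 - y^7/5040 + y^9/362880 - Real.sin y)
      (by norm_num)
      (fun y => by
        have h := (Real.hasDerivAt_cos y).sub
          ((((((hasDerivAt_const y (1:ℝ)).sub (hdiv 2 2 y)).add (hdiv 4 24 y)).sub
            (hdiv 6 720 y)).add (hdiv 8 40320 y)).sub (hdiv 10 3628800 y))
        refine h.congr_deriv ?_
        norm_num
        ring)
      (fun y hy => by
        have := sin_ub9 hy
        linarith) x hx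
  linarith

set_option maxHeartbeats 2000000 in
private lemma key_ineq (x : ℝ) (hx : 0 < x) (hxpi : x < π) :
    0 ≤ 2*x^2*Real.cos (2*x) - 4*(Real.cos (2*x) - 1) - 5*x*Real.sin (2*x) := by
  have hpy : Real.sin x ^ 2 + Real.cos x ^ 2 = 1 := Real.sin_sq_add_cos_sq x
  have hidc : Real.cos (2*x) = 1 - 2*Real.sin x^2 := by
    rw [Real.cos_two_mul]; linarith
  rcases le_or_gt x 1.7 with hsplit | hsplit
  · -- small x : Taylor bounds
    have h2x : (0:ℝ) ≤ 2*x := by linarith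
    have hC := cos_lb10 h2x
    have hS := sin_ub9 h2x
    have hs3 := sin_lb3 hx.le
    have hnn : 0 ≤ x - x^3/6 := by nlinarith
    have hC2 : (x - x^3/6)^2 ≤ Real.sin x^2 := pow_le_pow_left₀ hnn hs3 2
    have hA : 0 ≤ x^2 * (Real.cos (2*x) -
        (1 - (2*x)^2/2 + (2*x)^4/24 - (2*x)^6/720 + (2*x)^8/40320 - (2*x)^10/3628800)) :=
      mul_nonneg (sq_nonneg x) (by linarith)
    have hB : 0 ≤ x * (((2*x) - (2*x)^3/6 + (2*x)^5/120 - (2*x)^7/5040 + (2*x)^9/362880)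
        - Real.sin (2*x)) := mul_nonneg hx.le (by linarith)
    have h61 : 0 ≤ x^6 * (1/9 - 8/315*x^2) := by
      apply mul_nonneg (by positivity)
      nlinarith
    have h101 : 0 ≤ x^10 * (8/2835 - 4/14175*x^2) := by
      apply mul_nonneg (by positivity)
      nlinarith
    nlinarith [hA, hB, hC2, h61, h101]
  · -- large x : reflection at 2π
    have hpi4 := Real.pi_lt_d4   -- π < 3.1416
    have hpi2 := Real.pi_gt_d2   -- 3.14 < π
    set w : ℝ := 2*π - 2*x with hw
    have hcw : Real.cos w = Real.cos (2*x) := by rw [hw]; exact Real.cos_two_pi_sub (2*x)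
    have hsw : Real.sin w = -Real.sin (2*x) := by rw [hw]; exact Real.sin_two_pi_sub (2*x)
    have hw0 : 0 ≤ w := by rw [hw]; linarith
    have hwpi : w ≤ π := by rw [hw]; linarith
    have hsinw : 0 ≤ Real.sin w := Real.sin_nonneg_of_nonneg_of_le_pi hw0 hwpi
    have hx2 : 2 ≤ x^2 := by nlinarith
    rcases le_or_gt 0 (Real.cos w) with hcnn | hcneg
    · have t1 : 0 ≤ (2*x^2 - 4) * Real.cos w := mul_nonneg (by linarith) hcnn
      have t2 : 0 ≤ 5*x * Real.sin w := mul_nonneg (by linarith) hsinw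
      nlinarith [t1, t2, hcw, hsw]
    · have hw2 : π/2 ≤ w := by
        by_contra hcon
        push_neg at hcon
        have : 0 ≤ Real.cos w := Real.cos_nonneg_of_mem_Icc ⟨by linarith, hcon.le⟩
        linarith
      have hv0 : 0 ≤ π - w := by linarith
      have hv2 : π - w ≤ π/2 := by linarith
      have hsv : 2/π * (π - w) ≤ Real.sin (π - w) := Real.mul_le_sin hv0 hv2
      rw [Real.sin_pi_sub] at hsv
      have hslope : (0.63:ℝ) ≤ 2/π := by
        rw [le_div_iff₀ Real.pi_pos]
        linarith
      have hsv' : 0.63 * (π - w) ≤ Real.sin w := by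
        have hm := mul_le_mul_of_nonneg_right hslope hv0
        linarith
      have hcm1 : -1 ≤ Real.cos w := Real.neg_one_le_cos w
      have t1 : 0 ≤ (2*x^2 - 4) * (Real.cos w + 1) := mul_nonneg (by linarith) (by linarith)
      have t2 : 0 ≤ 5*x * (Real.sin w - 0.63*(π - w)) :=
        mul_nonneg (by linarith) (by linarith)
      have hxpos : (0:ℝ) < x := hx
      have hprod : π * x < 3.1416 * x := mul_lt_mul_of_pos_right hpi4 hxpos
      have hres : 0 ≤ -(2*x^2-4) + 4 + 5*x*(0.63*(π-w)) := by
        rw [hw]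
        nlinarith [sq_nonneg (2*x - 2.3), hxpi, hprod]
      have hsw' : Real.sin (2*x) = -Real.sin w := by rw [hsw]; ring
      rw [← hcw, hsw']
      linarith [t1, t2, hres]

/-- The scalar inequality (after taking `b → 0`) in the proof of
`tr F₁(1-t) ≥ -5/t` on the Heisenberg group. -/
theorem scalar_trace_estimate (c t : ℝ) (h1 : 0 < |c| * t) (h2 : |c| * t < π)
    (ht : 0 < t) :
    ((Real.cos (2 * c * t) - 1) + 2 * t ^ 2 * c ^ 2 * Real.cos (2 * c * t)) /
        (t * (Real.cos (2 * c * t) - 1) + t ^ 2 * c * Real.sin (2 * c * t)) ≤ 5 / t := by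
  rcases eq_or_ne c 0 with rfl | hc
  · simp at h1
  set a : ℝ := |c| with ha
  have ha0 : 0 < a := abs_pos.2 hc
  have hx0 : 0 < a * t := h1
  have hxpi : a * t < π := h2
  have hcos : Real.cos (2 * c * t) = Real.cos (2 * (a * t)) := by
    rcases abs_cases c with ⟨hca, _⟩ | ⟨hca, _⟩
    · rw [ha, hca]; ring_nf
    · rw [ha, hca, show 2 * (-c * t) = -(2 * c * t) by ring, Real.cos_neg]
  have hsin : c * Real.sin (2 * c * t) = a * Real.sin (2 * (a * t)) := by
    rcases abs_cases c with ⟨hca, _⟩ | ⟨hca, _⟩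
    · rw [ha, hca]; ring_nf
    · rw [ha, hca, show 2 * (-c * t) = -(2 * c * t) by ring, Real.sin_neg]; ring
  have hc2 : c ^ 2 = a ^ 2 := by rw [ha, sq_abs]
  -- denominator is negative
  have hsx : 0 < Real.sin (a * t) := Real.sin_pos_of_pos_of_lt_pi hx0 hxpi
  have hxc : (a * t) * Real.cos (a * t) < Real.sin (a * t) := by
    rcases le_or_gt (Real.cos (a * t)) 0 with h | h
    · nlinarith
    · have hx2 : a * t < π / 2 := by
        by_contra hcon
        push_neg at hcon
        have : Real.cos (a * t) ≤ 0 :=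
          Real.cos_nonpos_of_pi_div_two_le_of_le hcon (by linarith [Real.pi_pos])
        linarith
      have htan := Real.lt_tan hx0 hx2
      rw [Real.tan_eq_sin_div_cos] at htan
      exact (lt_div_iff₀ h).1 htan
  have hiden : Real.cos (2 * (a * t)) - 1 + (a * t) * Real.sin (2 * (a * t))
      = 2 * Real.sin (a * t) * ((a * t) * Real.cos (a * t) - Real.sin (a * t)) := by
    rw [Real.sin_two_mul, Real.cos_two_mul]
    linear_combination 2 * (Real.sin_sq_add_cos_sq (a * t))
  have hDneg : t * (Real.cos (2 * c * t) - 1) + t ^ 2 * c * Real.sin (2 * c * t) < 0 := by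
    have h5 : t ^ 2 * c * Real.sin (2 * c * t) = t * ((a * t) * Real.sin (2 * (a * t))) := by
      rw [show t ^ 2 * c * Real.sin (2 * c * t) = t ^ 2 * (c * Real.sin (2 * c * t)) by ring,
        hsin]
      ring
    rw [h5, hcos]
    have hneg : Real.cos (2 * (a * t)) - 1 + (a * t) * Real.sin (2 * (a * t)) < 0 := by
      rw [hiden]
      nlinarith
    nlinarith
  rw [div_le_iff_of_neg hDneg]
  have key := key_ineq (a * t) hx0 hxpi
  have hkey' : 0 ≤ t * (2 * (a*t)^2 * Real.cos (2*(a*t)) - 4 * (Real.cos (2*(a*t)) - 1)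
      - 5 * (a*t) * Real.sin (2*(a*t))) := mul_nonneg ht.le key
  have h5 : t ^ 2 * c * Real.sin (2 * c * t) = t * ((a * t) * Real.sin (2 * (a * t))) := by
    rw [show t ^ 2 * c * Real.sin (2 * c * t) = t ^ 2 * (c * Real.sin (2 * c * t)) by ring, hsin]
    ring
  rw [div_mul_eq_mul_div, div_le_iff₀ ht]
  rw [hcos, hc2, h5]
  nlinarith [hkey']
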